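/- Let A be a DG R-algebra and M, N DG A-modules. There is an injective homomorphism of abelian groups κ: H_0(Hom_A(Σ^{-1}M, N)) → YExt^1_A(M, N) whose image is exactly the set of equivalence classes of graded-split short exact sequences 0 → N → X → M → 0 of DG A-modules. In particular, if M is graded-projective then κ is bijective and H_{−1}(Hom_A(M, N)) ≅ YExt^1_A(M, N). -/

import Mathlib

open Function

/-- A chain complex of `R`-modules, indexed homologically over `ℤ`. -/
structure Cx (R : Type) [CommRing R] where
  X : ℤ → Type
  [acg : ∀ i, AddCommGroup (X i)]
  [mod : ∀ i, Module R (X i)]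
  d : ∀ i, X i →ₗ[R] X (i - 1)
  d_sq : ∀ i x, d (i - 1) (d i x) = 0

attribute [instance] Cx.acg Cx.mod

variable {R : Type} [CommRing R]

/-- Transport along an equality of degrees. -/
def Cx.cst (M : Cx R) {i j : ℤ} (h : i = j) : M.X i →ₗ[R] M.X j where
  toFun x := congrArg M.X h ▸ x
  map_add' := by subst h; intro x y; rfl
  map_smul' := by subst h; intro r x; rfl

/-- A positively graded, graded commutative DG `R`-algebra. -/
structure DGAlg (R : Type) [CommRing R] extends Cx R where
  one : toCx.X 0
  mul : ∀ {i j : ℤ}, toCx.X i → toCx.X j → toCx.X (i + j)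
  pos : ∀ i : ℤ, i < 0 → Subsingleton (toCx.X i)
  mul_add : ∀ {i j} (a : toCx.X i) (b c : toCx.X j), mul a (b + c) = mul a b + mul a c
  add_mul : ∀ {i j} (a b : toCx.X i) (c : toCx.X j), mul (a + b) c = mul a c + mul b c
  smul_mul : ∀ {i j} (r : R) (a : toCx.X i) (b : toCx.X j), mul (r • a) b = r • mul a b
  mul_smul : ∀ {i j} (r : R) (a : toCx.X i) (b : toCx.X j), mul a (r • b) = r • mul a b
  one_mul : ∀ {i} (a : toCx.X i), toCx.cst (zero_add i) (mul one a) = a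
  mul_one : ∀ {i} (a : toCx.X i), toCx.cst (add_zero i) (mul a one) = a
  mul_assoc : ∀ {i j k} (a : toCx.X i) (b : toCx.X j) (c : toCx.X k),
    toCx.cst (add_assoc i j k) (mul (mul a b) c) = mul a (mul b c)
  mul_comm : ∀ {i j} (a : toCx.X i) (b : toCx.X j),
    mul a b = ((i * j).negOnePow : ℤ) • toCx.cst (add_comm j i) (mul b a)
  leibniz : ∀ {i j} (a : toCx.X i) (b : toCx.X j),
    toCx.d (i + j) (mul a b) =
      toCx.cst (by omega) (mul (toCx.d i a) b) +
      (i.negOnePow : ℤ) • toCx.cst (by omega) (mul a (toCx.d j b))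

/-- A DG module over a DG `R`-algebra `A`. -/
structure DGMod (R : Type) [CommRing R] (A : DGAlg R) extends Cx R where
  smul : ∀ {i j : ℤ}, A.X i → toCx.X j → toCx.X (i + j)
  smul_add : ∀ {i j} (a : A.X i) (m m' : toCx.X j), smul a (m + m') = smul a m + smul a m'
  add_smul : ∀ {i j} (a a' : A.X i) (m : toCx.X j), smul (a + a') m = smul a m + smul a' m
  smul_rsmul : ∀ {i j} (r : R) (a : A.X i) (m : toCx.X j), smul (r • a) m = r • smul a m
  rsmul_smul : ∀ {i j} (r : R) (a : A.X i) (m : toCx.X j), smul a (r • m) = r • smul a m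
  one_smul : ∀ {j} (m : toCx.X j), toCx.cst (zero_add j) (smul A.one m) = m
  mul_smul : ∀ {i j k} (a : A.X i) (b : A.X j) (m : toCx.X k),
    toCx.cst (add_assoc i j k) (smul (A.mul a b) m) = smul a (smul b m)
  leibniz : ∀ {i j} (a : A.X i) (m : toCx.X j),
    toCx.d (i + j) (smul a m) =
      toCx.cst (by omega) (smul (A.d i a) m) +
      (i.negOnePow : ℤ) • toCx.cst (by omega) (smul a (toCx.d j m))

namespace DGMod

variable {A : DGAlg R}

lemma smul_zero' (M : DGMod R A) {i j : ℤ} (a : A.X i) :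
    M.smul a (0 : M.X j) = 0 := by
  have h := M.smul_add a (0 : M.X j) 0
  rw [add_zero] at h
  exact (left_eq_add.mp h)

/-- scalar multiplication by `a ∈ A_i`, as an `R`-linear map -/
def smulL (M : DGMod R A) {i j : ℤ} (a : A.X i) : M.X j →ₗ[R] M.X (i + j) where
  toFun m := M.smul a m
  map_add' := M.smul_add a
  map_smul' r m := M.rsmul_smul r a m

end DGMod

variable {A : DGAlg R}

/-- A morphism of DG `A`-modules. -/
structure DGHom (M N : DGMod R A) where
  f : ∀ i, M.X i →ₗ[R] N.X i
  comm_d : ∀ i m, f (i - 1) (M.d i m) = N.d i (f i m)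
  comm_smul : ∀ {i j} (a : A.X i) (m : M.X j), f (i + j) (M.smul a m) = N.smul a (f j m)

namespace DGHom

variable {M N P : DGMod R A}

def comp (g : DGHom N P) (h : DGHom M N) : DGHom M P where
  f i := (g.f i).comp (h.f i)
  comm_d i m := by simp [h.comm_d, g.comm_d]
  comm_smul {i j} a m := by simp [h.comm_smul, g.comm_smul]

instance : Zero (DGHom M N) :=
  ⟨{ f := fun _ => 0
     comm_d := by intro i m; simp
     comm_smul := by intro i j a m; simp [N.smul_zero'] }⟩

instance : Add (DGHom M N) :=
  ⟨fun g h =>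
    { f := fun i => g.f i + h.f i
      comm_d := by intro i m; simp [g.comm_d, h.comm_d]
      comm_smul := by intro i j a m; simp [g.comm_smul, h.comm_smul, N.smul_add] }⟩

instance : Neg (DGHom M N) :=
  ⟨fun g =>
    { f := fun i => -g.f i
      comm_d := by intro i m; simp [g.comm_d]
      comm_smul := by
        intro i j a m
        have h0 := N.smul_add a (g.f j m) (-g.f j m)
        rw [add_neg_cancel, N.smul_zero'] at h0
        simp only [LinearMap.neg_apply, g.comm_smul]
        exact neg_eq_of_add_eq_zero_right h0.symm }⟩

instance : Sub (DGHom M N) := ⟨fun g h => g + -h⟩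

end DGHom

/-- A graded `A`-linear map of degree `0` (not necessarily a chain map). -/
structure GH0 (M N : DGMod R A) where
  f : ∀ i, M.X i →ₗ[R] N.X i
  comm_smul : ∀ {i j} (a : A.X i) (m : M.X j), f (i + j) (M.smul a m) = N.smul a (f j m)

/-- A graded `A`-linear map of degree `-1` (with the Koszul sign rule). -/
structure GHneg (M N : DGMod R A) where
  f : ∀ i, M.X i →ₗ[R] N.X (i - 1)
  comm_smul : ∀ {i j} (a : A.X i) (m : M.X j),
    f (i + j) (M.smul a m) = (i.negOnePow : ℤ) • N.cst (by omega) (N.smul a (f j m))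

/-- A graded `A`-linear map of degree `n` (with the Koszul sign rule):
the degree `n` component of the Hom complex `Hom_A(M,N)`. -/
structure GHn (M N : DGMod R A) (n : ℤ) where
  f : ∀ i, M.X i →ₗ[R] N.X (i + n)
  comm_smul : ∀ {i j} (a : A.X i) (m : M.X j),
    f (i + j) (M.smul a m) = ((i * n).negOnePow : ℤ) • N.cst (by omega) (N.smul a (f j m))

namespace GHneg

variable {M N : DGMod R A}

instance : Zero (GHneg M N) :=
  ⟨{ f := fun _ => 0
     comm_smul := by intro i j a m; simp [N.smul_zero'] }⟩

instance : Add (GHneg M N) :=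
  ⟨fun g h =>
    { f := fun i => g.f i + h.f i
      comm_smul := by
        intro i j a m
        simp only [LinearMap.add_apply, g.comm_smul, h.comm_smul, ← smul_add, ← map_add,
          N.smul_add] }⟩

instance : Neg (GHneg M N) :=
  ⟨fun g =>
    { f := fun i => -g.f i
      comm_smul := by
        intro i j a m
        have h0 := N.smul_add a (g.f j m) (-(g.f j m))
        rw [add_neg_cancel, N.smul_zero'] at h0
        have h1 : N.smul a (-(g.f j m)) = -N.smul a (g.f j m) :=
          (neg_eq_of_add_eq_zero_right h0.symm).symm
        simp only [LinearMap.neg_apply, g.comm_smul, h1, map_neg, smul_neg] }⟩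

instance : Sub (GHneg M N) := ⟨fun g h => g + -h⟩

/-- `λ` is a cycle of degree `-1` in `Hom_A(M,N)`: `∂^N ∘ λ + λ ∘ ∂^M = 0`. -/
def isCycle (l : GHneg M N) : Prop :=
  ∀ i m, N.d (i - 1) (l.f i m) + l.f (i - 1) (M.d i m) = 0

/-- `λ` is a boundary of degree `-1` in `Hom_A(M,N)`:
`λ = ∂^N ∘ v − v ∘ ∂^M` for a degree `0` graded `A`-linear map `v`. -/
def isBdry (l : GHneg M N) : Prop :=
  ∃ v : GH0 M N, ∀ i m, l.f i m = N.d i (v.f i m) - v.f (i - 1) (M.d i m)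

end GHneg

namespace GHn

variable {M N : DGMod R A} {n : ℤ}

instance : Zero (GHn M N n) :=
  ⟨{ f := fun _ => 0
     comm_smul := by intro i j a m; simp [N.smul_zero'] }⟩

instance : Add (GHn M N n) :=
  ⟨fun g h =>
    { f := fun i => g.f i + h.f i
      comm_smul := by
        intro i j a m
        simp only [LinearMap.add_apply, g.comm_smul, h.comm_smul, ← smul_add, ← map_add,
          N.smul_add] }⟩

instance : Neg (GHn M N n) :=
  ⟨fun g =>
    { f := fun i => -g.f i
      comm_smul := by
        intro i j a m
        have h0 := N.smul_add a (g.f j m) (-(g.f j m))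
        rw [add_neg_cancel, N.smul_zero'] at h0
        have h1 : N.smul a (-(g.f j m)) = -N.smul a (g.f j m) :=
          (neg_eq_of_add_eq_zero_right h0.symm).symm
        simp only [LinearMap.neg_apply, g.comm_smul, h1, map_neg, smul_neg] }⟩

instance : Sub (GHn M N n) := ⟨fun g h => g + -h⟩

/-- the cycle condition in degree `n` of the Hom complex: `∂^N ∘ f = (−1)^n f ∘ ∂^M` -/
def isCycle (l : GHn M N n) : Prop :=
  ∀ i m, N.d (i + n) (l.f i m) = (n.negOnePow : ℤ) • N.cst (by omega) (l.f (i - 1) (M.d i m))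

/-- the boundary condition in degree `n` of the Hom complex -/
def isBdry (l : GHn M N n) : Prop :=
  ∃ v : GHn M N (n + 1), ∀ i m,
    l.f i m = N.cst (by omega) (N.d (i + (n + 1)) (v.f i m)) -
      ((n + 1).negOnePow : ℤ) • N.cst (by omega) (v.f (i - 1) (M.d i m))

end GHn

lemma DGHom.f_cst {M N : DGMod R A} (p : DGHom M N) {u v : ℤ} (h : u = v) (x : M.X u) :
    p.f v (M.cst h x) = N.cst h (p.f u x) := by subst h; rfl

namespace GHn

/-- postcomposition with a morphism, on degree `n` graded maps -/
def map {Q M N : DGMod R A} (p : DGHom M N) (l : GHn Q M n) : GHn Q N n where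
  f i := (p.f (i + n)).comp (l.f i)
  comm_smul := by
    intro i j a m
    show p.f (i + j + n) (l.f (i + j) _) = _
    rw [l.comm_smul a m, map_zsmul, DGHom.f_cst, p.comm_smul]
    rfl

end GHn

/-- A short exact sequence (extension) of DG `A`-modules `0 → N → E → Q → 0`. -/
structure DGExt (Q N : DGMod R A) where
  E : DGMod R A
  ι : DGHom N E
  p : DGHom E Q
  inj : ∀ i, Injective (ι.f i)
  surj : ∀ i, Surjective (p.f i)
  exact : ∀ i, LinearMap.range (ι.f i) = LinearMap.ker (p.f i)

namespace DGExt

variable {Q N : DGMod R A}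

/-- an extension splits if the inclusion admits a retraction which is a morphism
of DG `A`-modules -/
def Splits (e : DGExt Q N) : Prop :=
  ∃ h : DGHom e.E N, ∀ i x, h.f i (e.ι.f i x) = x

/-- an extension is graded-split if there are degree `0` graded `A`-linear maps
`h, k` with `h∘ι = id`, `p∘k = id`, `h∘k = 0` and `ι∘h + k∘p = id` -/
def GradedSplit (e : DGExt Q N) : Prop :=
  ∃ (h : GH0 e.E N) (k : GH0 Q e.E),
    (∀ i x, h.f i (e.ι.f i x) = x) ∧
    (∀ i q, e.p.f i (k.f i q) = q) ∧
    (∀ i q, h.f i (k.f i q) = 0) ∧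
    (∀ i x, e.ι.f i (h.f i x) + k.f i (e.p.f i x) = x)

/-- Yoneda equivalence of extensions: an isomorphism of DG `A`-modules compatible with
the identity maps on `N` and `Q` -/
def Equiv' (e e' : DGExt Q N) : Prop :=
  ∃ φ : DGHom e.E e'.E, (∀ i, Bijective (φ.f i)) ∧
    (∀ i x, φ.f i (e.ι.f i x) = e'.ι.f i x) ∧
    (∀ i x, e'.p.f i (φ.f i x) = e.p.f i x)

end DGExt

/-- `Q` is graded-projective: `Hom_A(Q,−)` preserves surjectivity of morphisms. -/
def GradedProjective (Q : DGMod R A) : Prop :=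
  ∀ (M N : DGMod R A) (p : DGHom M N), (∀ i, Surjective (p.f i)) →
    ∀ (n : ℤ) (g : GHn Q N n), ∃ h : GHn Q M n, ∀ i m, p.f (i + n) (h.f i m) = g.f i m

/-- `P` is categorically projective: a projective object of the abelian category of
DG `A`-modules. -/
def CatProjective (P : DGMod R A) : Prop :=
  ∀ (M N : DGMod R A) (p : DGHom M N), (∀ i, Surjective (p.f i)) →
    ∀ g : DGHom P N, ∃ h : DGHom P M, ∀ i x, p.f i (h.f i x) = g.f i x

/-- `M` is acyclic (homologically trivial). -/
def AcyclicD (M : DGMod R A) : Prop :=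
  ∀ i x, M.d i x = 0 → ∃ y, x = M.cst (by omega) (M.d (i + 1) y)

/-- Elementwise formulation of "`p` induces isomorphisms on all homology groups". -/
def QuasiIsoD {M N : DGMod R A} (p : DGHom M N) : Prop :=
  ∀ i, (∀ z, N.d i z = 0 → ∃ x, M.d i x = 0 ∧
        ∃ w, z - p.f i x = N.cst (by omega) (N.d (i + 1) w)) ∧
    (∀ x, M.d i x = 0 → (∃ w, p.f i x = N.cst (by omega) (N.d (i + 1) w)) →
        ∃ v, x = M.cst (by omega) (M.d (i + 1) v))

/-- `Q` is semi-projective: it is graded-projective and `Hom_A(Q,−)` sends surjective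
quasiisomorphisms to surjective quasiisomorphisms. -/
def SemiProjective (Q : DGMod R A) : Prop :=
  GradedProjective Q ∧
  ∀ (M N : DGMod R A) (p : DGHom M N), (∀ i, Surjective (p.f i)) → QuasiIsoD p →
    ((∀ (n : ℤ) (g : GHn Q N n), ∃ h : GHn Q M n, ∀ i m, (GHn.map p h).f i m = g.f i m) ∧
     (∀ n : ℤ,
        (∀ g : GHn Q N n, g.isCycle →
          ∃ h : GHn Q M n, h.isCycle ∧ (g - GHn.map p h).isBdry) ∧
        (∀ h : GHn Q M n, h.isCycle → (GHn.map p h).isBdry → h.isBdry)))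

/-- the underlying complex of `N ⊕_λ Q` -/
def twistCx (N Q : DGMod R A) (l : GHneg Q N) (hc : l.isCycle) : Cx R where
  X i := N.X i × Q.X i
  acg i := inferInstance
  mod i := inferInstance
  d i := LinearMap.prod
    ((N.d i).comp (LinearMap.fst _ _ _) + (l.f i).comp (LinearMap.snd _ _ _))
    ((Q.d i).comp (LinearMap.snd _ _ _))
  d_sq := by
    intro i x
    have h := hc i x.2
    simp only [LinearMap.prod_apply, LinearMap.add_apply, LinearMap.coe_comp, comp_apply,
      LinearMap.fst_apply, LinearMap.snd_apply, Pi.prod]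
    rw [Prod.ext_iff]
    constructor
    · show (N.d (i-1)) ((N.d i) x.1 + (l.f i) x.2) + (l.f (i - 1)) ((Q.d i) x.2) = 0
      rw [map_add, N.d_sq, zero_add, h]
    · exact Q.d_sq i x.2

lemma twistCx_cst (N Q : DGMod R A) (l : GHneg Q N) (hc : l.isCycle) {u v : ℤ} (h : u = v)
    (x : N.X u × Q.X u) :
    (twistCx N Q l hc).cst h x = (N.cst h x.1, Q.cst h x.2) := by subst h; rfl

/-- The DG module `N ⊕_λ Q`: underlying graded module `N ⊕ Q`, with differential
`[[∂^N, λ],[0, ∂^Q]]`, attached to a degree `-1` cycle `λ ∈ Hom_A(Q,N)_{-1}`. -/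
def stdMod (N Q : DGMod R A) (l : GHneg Q N) (hc : l.isCycle) : DGMod R A where
  toCx := twistCx N Q l hc
  smul {i j} a m := (N.smul a m.1, Q.smul a m.2)
  smul_add := by
    intro i j a m m'
    refine Prod.ext ?_ ?_
    · show N.smul a (m.1 + m'.1) = N.smul a m.1 + N.smul a m'.1
      exact N.smul_add a m.1 m'.1
    · show Q.smul a (m.2 + m'.2) = Q.smul a m.2 + Q.smul a m'.2
      exact Q.smul_add a m.2 m'.2
  add_smul := by
    intro i j a a' m
    refine Prod.ext ?_ ?_
    · exact N.add_smul a a' m.1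
    · exact Q.add_smul a a' m.2
  smul_rsmul := by
    intro i j r a m
    refine Prod.ext ?_ ?_
    · exact N.smul_rsmul r a m.1
    · exact Q.smul_rsmul r a m.2
  rsmul_smul := by
    intro i j r a m
    refine Prod.ext ?_ ?_
    · show N.smul a (r • m.1) = r • N.smul a m.1
      exact N.rsmul_smul r a m.1
    · show Q.smul a (r • m.2) = r • Q.smul a m.2
      exact Q.rsmul_smul r a m.2
  one_smul := by
    intro j m
    rw [twistCx_cst]
    exact Prod.ext (N.one_smul m.1) (Q.one_smul m.2)
  mul_smul := by
    intro i j k a b m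
    rw [twistCx_cst]
    exact Prod.ext (N.mul_smul a b m.1) (Q.mul_smul a b m.2)
  leibniz := by
    intro i j a m
    rw [twistCx_cst, twistCx_cst]
    simp only [LinearMap.prod_apply, LinearMap.add_apply, LinearMap.coe_comp, comp_apply,
      LinearMap.fst_apply, LinearMap.snd_apply, Pi.prod, Prod.smul_def, Prod.mk_add_mk]
    refine Prod.ext ?_ ?_
    · show N.d (i + j) (N.smul a m.1) + l.f (i + j) (Q.smul a m.2) =
        N.cst _ (N.smul (A.d i a) m.1) +
          (i.negOnePow : ℤ) • N.cst _ (N.smul a (N.d j m.1 + l.f j m.2))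
      rw [N.leibniz, l.comm_smul, N.smul_add, map_add, smul_add]
      abel
    · show Q.d (i + j) (Q.smul a m.2) =
        Q.cst _ (Q.smul (A.d i a) m.2) + (i.negOnePow : ℤ) • Q.cst _ (Q.smul a (Q.d j m.2))
      rw [Q.leibniz]

/-- The graded-split extension `0 → N → N ⊕_λ Q → Q → 0` attached to a cycle `λ`. -/
def stdExt (N Q : DGMod R A) (l : GHneg Q N) (hc : l.isCycle) : DGExt Q N where
  E := stdMod N Q l hc
  ι := { f := fun i => LinearMap.inl _ _ _
         comm_d := by
           intro i m
           refine Prod.ext ?_ ?_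
           · show N.d i m = N.d i m + l.f i 0
             rw [map_zero, add_zero]
           · show (0 : Q.X (i - 1)) = Q.d i 0
             rw [map_zero]
         comm_smul := by
           intro i j a m
           refine Prod.ext ?_ ?_
           · rfl
           · exact (Q.smul_zero' a).symm }
  p := { f := fun i => LinearMap.snd _ _ _
         comm_d := by intro i m; rfl
         comm_smul := by intro i j a m; rfl }
  inj := fun i => LinearMap.inl_injective
  surj := fun i => LinearMap.snd_surjective
  exact := fun i => LinearMap.range_inl _ _ _

/-- `t` is a Baer sum of `e` and `e'`: it is obtained from the pullback `e.E ×_Q e'.E`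
by dividing out the antidiagonal copy of `N` (image of `x ↦ (−x, x)`). -/
def IsBaerSum {Q N : DGMod R A} (e e' t : DGExt Q N) : Prop :=
  ∃ (P : DGMod R A) (p1 : DGHom P e.E) (p2 : DGHom P e'.E) (γ : DGHom N P)
      (τ : DGHom P t.E),
    -- `P` is the pullback of `e.p` and `e'.p`:
    (∀ i x, e.p.f i (p1.f i x) = e'.p.f i (p2.f i x)) ∧
    (∀ i, Injective fun x : P.X i => (p1.f i x, p2.f i x)) ∧
    (∀ (i : ℤ) (u : e.E.X i) (v : e'.E.X i), e.p.f i u = e'.p.f i v →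
      ∃ x : P.X i, p1.f i x = u ∧ p2.f i x = v) ∧
    -- `γ` is the antidiagonal embedding of `N` into the pullback:
    (∀ i x, p1.f i (γ.f i x) = -(e.ι.f i x)) ∧
    (∀ i x, p2.f i (γ.f i x) = e'.ι.f i x) ∧
    -- `τ` realizes `t.E` as the quotient of the pullback by the antidiagonal `N`:
    (∀ i, Surjective (τ.f i)) ∧
    (∀ i, LinearMap.range (γ.f i) = LinearMap.ker (τ.f i)) ∧
    -- compatibility with the structure maps of `t`:
    (∀ (i : ℤ) (n : N.X i) (x : P.X i),
      p1.f i x = e.ι.f i n → p2.f i x = 0 → τ.f i x = t.ι.f i n) ∧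
    (∀ i x, t.p.f i (τ.f i x) = e.p.f i (p1.f i x))

lemma GHneg.isCycle_add {R : Type} [CommRing R] {A : DGAlg R} {N Q : DGMod R A}
    {l l' : GHneg Q N} (hc : l.isCycle) (hc' : l'.isCycle) : (l + l').isCycle := by
  intro i m
  have h1 := hc i m
  have h2 := hc' i m
  show N.d (i - 1) (l.f i m + l'.f i m) +
    ((l.f (i - 1)) ((Q.d i) m) + (l'.f (i - 1)) ((Q.d i) m)) = 0
  rw [map_add]
  have h3 : ((N.d (i - 1)) ((l.f i) m) + (l.f (i - 1)) ((Q.d i) m)) +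
      ((N.d (i - 1)) ((l'.f i) m) + (l'.f (i - 1)) ((Q.d i) m)) = 0 := by
    rw [h1, h2, add_zero]
  rw [← h3]
  abel

section AuxBasic

variable {R : Type} [CommRing R] {A : DGAlg R}

lemma Cx.cst_cst (C : Cx R) {i j k : ℤ} (h : i = j) (h' : j = k) (x : C.X i) :
    C.cst h' (C.cst h x) = C.cst (h.trans h') x := by subst h h'; rfl

lemma Cx.cst_inj (C : Cx R) {i j : ℤ} (h : i = j) {x y : C.X i}
    (hxy : C.cst h x = C.cst h y) : x = y := by subst h; exact hxy

lemma Cx.d_cst (C : Cx R) {i j : ℤ} (h : i = j) (x : C.X i) :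
    C.d j (C.cst h x) = C.cst (by omega) (C.d i x) := by subst h; rfl

lemma DGMod.smul_cst (M : DGMod R A) {i j k : ℤ} (a : A.X i) (h : j = k) (m : M.X j) :
    M.smul a (M.cst h m) = M.cst (by omega) (M.smul a m) := by subst h; rfl

lemma DGMod.smul_sub (M : DGMod R A) {i j : ℤ} (a : A.X i) (m m' : M.X j) :
    M.smul a (m - m') = M.smul a m - M.smul a m' := map_sub (M.smulL a) m m'

lemma GH0.f_cst {M N : DGMod R A} (v : GH0 M N) {u w : ℤ} (h : u = w) (x : M.X u) :
    v.f w (M.cst h x) = N.cst h (v.f u x) := by subst h; rfl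

lemma GHneg.sub_f {M N : DGMod R A} (l l' : GHneg M N) (i : ℤ) (m : M.X i) :
    (l - l').f i m = l.f i m - l'.f i m := by
  show l.f i m + (-(l'.f i)) m = _
  simp [sub_eq_add_neg]

lemma GHneg.add_f {M N : DGMod R A} (l l' : GHneg M N) (i : ℤ) (m : M.X i) :
    (l + l').f i m = l.f i m + l'.f i m := rfl

/-- the identity morphism -/
def DGHom.idh (M : DGMod R A) : DGHom M M where
  f _ := LinearMap.id
  comm_d _ _ := rfl
  comm_smul _ _ := rfl

/-- the inverse of a bijective morphism -/
noncomputable def DGHom.inv {M N : DGMod R A} (p : DGHom M N) (hb : ∀ i, Bijective (p.f i)) :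
    DGHom N M where
  f i := ((LinearEquiv.ofBijective (p.f i) (hb i)).symm : N.X i →ₗ[R] M.X i)
  comm_d i n := by
    apply (hb (i - 1)).1
    have h1 : ∀ j (y : N.X j), p.f j ((LinearEquiv.ofBijective (p.f j) (hb j)).symm y) = y :=
      fun j y => (LinearEquiv.ofBijective (p.f j) (hb j)).apply_symm_apply y
    show p.f (i - 1) ((LinearEquiv.ofBijective (p.f (i-1)) (hb (i-1))).symm (N.d i n)) =
      p.f (i - 1) (M.d i ((LinearEquiv.ofBijective (p.f i) (hb i)).symm n))
    rw [h1, p.comm_d, h1]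
  comm_smul {i j} a m := by
    apply (hb (i + j)).1
    have h1 : ∀ j (y : N.X j), p.f j ((LinearEquiv.ofBijective (p.f j) (hb j)).symm y) = y :=
      fun j y => (LinearEquiv.ofBijective (p.f j) (hb j)).apply_symm_apply y
    show p.f (i + j) ((LinearEquiv.ofBijective (p.f (i+j)) (hb (i+j))).symm (N.smul a m)) =
      p.f (i + j) (M.smul a ((LinearEquiv.ofBijective (p.f j) (hb j)).symm m))
    rw [h1, p.comm_smul, h1]

lemma DGExt.Equiv'.refl' {Q N : DGMod R A} (e : DGExt Q N) : e.Equiv' e :=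
  ⟨DGHom.idh e.E, fun _ => bijective_id, fun _ _ => rfl, fun _ _ => rfl⟩

lemma DGExt.Equiv'.symm' {Q N : DGMod R A} {e e' : DGExt Q N} (h : e.Equiv' e') :
    e'.Equiv' e := by
  obtain ⟨φ, hb, hι, hp⟩ := h
  refine ⟨φ.inv hb, fun i => (LinearEquiv.ofBijective (φ.f i) (hb i)).symm.bijective,
    fun i x => ?_, fun i x => ?_⟩
  · apply (hb i).1
    have h1 : ∀ (y : e'.E.X i), φ.f i ((φ.inv hb).f i y) = y :=
      fun y => (LinearEquiv.ofBijective (φ.f i) (hb i)).apply_symm_apply y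
    rw [h1, hι]
  · have h1 : ∀ (y : e'.E.X i), φ.f i ((φ.inv hb).f i y) = y :=
      fun y => (LinearEquiv.ofBijective (φ.f i) (hb i)).apply_symm_apply y
    rw [← hp i ((φ.inv hb).f i x), h1]

lemma DGExt.Equiv'.trans' {Q N : DGMod R A} {e e' e'' : DGExt Q N}
    (h : e.Equiv' e') (h' : e'.Equiv' e'') : e.Equiv' e'' := by
  obtain ⟨φ, hb, hι, hp⟩ := h
  obtain ⟨ψ, hb', hι', hp'⟩ := h'
  exact ⟨ψ.comp φ, fun i => (hb' i).comp (hb i),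
    fun i x => by show ψ.f i (φ.f i _) = _; rw [hι, hι'],
    fun i x => by show e''.p.f i (ψ.f i (φ.f i _)) = _; rw [hp', hp]⟩

lemma DGExt.equiv'_equivalence (Q N : DGMod R A) :
    Equivalence (DGExt.Equiv' (Q := Q) (N := N)) :=
  ⟨DGExt.Equiv'.refl', DGExt.Equiv'.symm', DGExt.Equiv'.trans'⟩

/-- the short five lemma -/
lemma DGExt.bij_of_compat {Q N : DGMod R A} (e e' : DGExt Q N) (φ : DGHom e.E e'.E)
    (hι : ∀ i x, φ.f i (e.ι.f i x) = e'.ι.f i x)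
    (hp : ∀ i x, e'.p.f i (φ.f i x) = e.p.f i x) : ∀ i, Bijective (φ.f i) := by
  intro i
  have hzero : ∀ x, φ.f i x = 0 → x = 0 := by
    intro x hx
    have hpx : e.p.f i x = 0 := by rw [← hp i x, hx, map_zero]
    have : x ∈ LinearMap.ker (e.p.f i) := hpx
    rw [← e.exact i] at this
    obtain ⟨n, rfl⟩ := this
    have : e'.ι.f i n = 0 := by rw [← hι, hx]
    have hn : n = 0 := e'.inj i (by rw [this, map_zero])
    rw [hn, map_zero]
  constructor
  · intro u v huv
    have : φ.f i (u - v) = 0 := by rw [map_sub, huv, sub_self]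
    have := hzero _ this
    rwa [sub_eq_zero] at this
  · intro y
    obtain ⟨x, hx⟩ := e.surj i (e'.p.f i y)
    have hz : e'.p.f i (y - φ.f i x) = 0 := by rw [map_sub, hp, hx, sub_self]
    have : y - φ.f i x ∈ LinearMap.ker (e'.p.f i) := hz
    rw [← e'.exact i] at this
    obtain ⟨n, hn⟩ := this
    exact ⟨x + e.ι.f i n, by rw [map_add, hι, hn]; abel⟩

end AuxBasic
section AuxStd

variable {R : Type} [CommRing R] {A : DGAlg R}

lemma stdExt_gradedSplit (N M : DGMod R A) (l : GHneg M N) (hc : l.isCycle) :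
    (stdExt N M l hc).GradedSplit := by
  refine ⟨⟨fun i => LinearMap.fst _ _ _, fun {i j} a m => rfl⟩,
    ⟨fun i => LinearMap.inr _ _ _, fun {i j} a m => ?_⟩,
    fun i x => rfl, fun i q => rfl, fun i q => rfl, fun i x => ?_⟩
  · refine Prod.ext ?_ ?_
    · exact (N.smul_zero' a).symm
    · rfl
  · show ((x.1, 0) : N.X i × M.X i) + (0, x.2) = x
    refine Prod.ext ?_ ?_
    · show x.1 + 0 = x.1; rw [add_zero]
    · show 0 + x.2 = x.2; rw [zero_add]

lemma stdExt_equiv_of_bdry {N M : DGMod R A} (l l' : GHneg M N) (hc : l.isCycle)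
    (hc' : l'.isCycle) (hb : (l - l').isBdry) :
    (stdExt N M l hc).Equiv' (stdExt N M l' hc') := by
  obtain ⟨v, hv⟩ := hb
  have hv' : ∀ i m, l.f i m = l'.f i m + N.d i (v.f i m) - v.f (i - 1) (M.d i m) := by
    intro i m
    have := hv i m
    rw [GHneg.sub_f] at this
    have := sub_eq_iff_eq_add.mp this
    rw [this]; abel
  refine ⟨⟨fun i => LinearMap.prod
      (LinearMap.fst _ _ _ + (v.f i).comp (LinearMap.snd _ _ _)) (LinearMap.snd _ _ _),
      ?_, ?_⟩, ?_, fun i x => ?_, fun i x => rfl⟩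
  · -- comm_d
    intro i x
    refine Prod.ext ?_ rfl
    show (N.d i x.1 + l.f i x.2) + v.f (i - 1) (M.d i x.2) =
      N.d i (x.1 + v.f i x.2) + l'.f i x.2
    rw [map_add, hv' i x.2]; abel
  · -- comm_smul
    intro i j a m
    refine Prod.ext ?_ rfl
    show N.smul a m.1 + v.f (i + j) (M.smul a m.2) = N.smul a (m.1 + v.f j m.2)
    rw [v.comm_smul, N.smul_add]
  · -- bijective
    intro i
    constructor
    · have hli : Function.LeftInverse (fun y : N.X i × M.X i => ((y.1 - v.f i y.2, y.2) : N.X i × M.X i))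
          (fun u : N.X i × M.X i => ((u.1 + v.f i u.2, u.2) : N.X i × M.X i)) := by
        intro u
        refine Prod.ext ?_ rfl
        show u.1 + v.f i u.2 - v.f i u.2 = u.1
        abel
      exact hli.injective
    · intro y
      refine ⟨(y.1 - v.f i y.2, y.2), Prod.ext ?_ rfl⟩
      show y.1 - v.f i y.2 + v.f i y.2 = y.1
      abel
  · -- ι compat
    refine Prod.ext ?_ rfl
    show x + v.f i 0 = x
    rw [map_zero, add_zero]

lemma stdExt_bdry_of_equiv {N M : DGMod R A} (l l' : GHneg M N) (hc : l.isCycle)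
    (hc' : l'.isCycle) (h : (stdExt N M l hc).Equiv' (stdExt N M l' hc')) :
    (l - l').isBdry := by
  obtain ⟨φ, hbij, hι, hp⟩ := h
  refine ⟨⟨fun i => (LinearMap.fst _ _ _).comp ((φ.f i).comp (LinearMap.inr _ _ _)), ?_⟩, ?_⟩
  · -- comm_smul of v
    intro i j a m
    have h0 : ((0, M.smul a m) : N.X (i+j) × M.X (i+j)) =
        (stdExt N M l hc).E.smul a ((0, m) : N.X j × M.X j) := by
      refine Prod.ext ?_ rfl
      exact (N.smul_zero' a).symm
    show (φ.f (i + j) (0, M.smul a m)).1 = N.smul a (φ.f j (0, m)).1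
    rw [h0]
    exact congrArg Prod.fst (φ.comm_smul a ((0, m) : N.X j × M.X j))
  · -- boundary identity
    intro i m
    have hsnd : ∀ (u : ℤ) (z : N.X u × M.X u), (φ.f u z).2 = z.2 := fun u z => hp u z
    have hfst : ∀ (u : ℤ) (n : N.X u), φ.f u ((n, 0) : N.X u × M.X u) = (n, 0) := fun u n => hι u n
    have hval : φ.f i ((0, m) : N.X i × M.X i) = ((φ.f i (0, m)).1, m) :=
      Prod.ext rfl (hsnd i (0, m))
    have hcd := φ.comm_d i ((0, m) : N.X i × M.X i)
    have hL : (stdExt N M l hc).E.d i ((0, m) : N.X i × M.X i) = (l.f i m, M.d i m) := by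
      refine Prod.ext ?_ rfl
      show N.d i 0 + l.f i m = l.f i m
      rw [map_zero, zero_add]
    rw [hL] at hcd
    have hsplit : ((l.f i m, M.d i m) : N.X (i-1) × M.X (i-1)) =
        (l.f i m, 0) + (0, M.d i m) := by simp
    erw [hsplit, map_add, hfst] at hcd
    rw [hval] at hcd
    have hRd : (stdExt N M l' hc').E.d i (((φ.f i ((0 : N.X i), m)).1, m) : N.X i × M.X i) =
        (N.d i (φ.f i ((0 : N.X i), m)).1 + l'.f i m, M.d i m) := rfl
    rw [hRd] at hcd
    have hmain : l.f i m + (φ.f (i-1) ((0 : N.X (i-1)), M.d i m)).1 =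
        N.d i (φ.f i ((0 : N.X i), m)).1 + l'.f i m := by
      have h5 := congrArg Prod.fst hcd
      exact h5
    rw [GHneg.sub_f]
    show l.f i m - l'.f i m =
      N.d i (φ.f i ((0 : N.X i), m)).1 - (φ.f (i-1) ((0 : N.X (i-1)), M.d i m)).1
    exact sub_eq_sub_iff_add_eq_add.mpr hmain

end AuxStd
section AuxSplit

variable {R : Type} [CommRing R] {A : DGAlg R}

lemma gradedSplit_equiv {N M : DGMod R A} (e : DGExt M N) (hs : e.GradedSplit) :
    ∃ (l : GHneg M N) (hc : l.isCycle), (stdExt N M l hc).Equiv' e := by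
  obtain ⟨h, k, hhι, hpk, hhk, hsum⟩ := hs
  have hpι : ∀ i (n : N.X i), e.p.f i (e.ι.f i n) = 0 := by
    intro i n
    have : e.ι.f i n ∈ LinearMap.ker (e.p.f i) := by
      rw [← e.exact i]; exact ⟨n, rfl⟩
    exact this
  have hιh : ∀ i (z : e.E.X i), e.p.f i z = 0 → e.ι.f i (h.f i z) = z := by
    intro i z hz
    have := hsum i z
    rwa [hz, map_zero, add_zero] at this
  -- the candidate cycle, as raw data
  have hιD : ∀ (u : ℤ) (w : M.X u),
      e.ι.f (u-1) (h.f (u-1) (e.E.d u (k.f u w) - k.f (u-1) (M.d u w))) =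
        e.E.d u (k.f u w) - k.f (u-1) (M.d u w) := by
    intro u w
    apply hιh
    rw [map_sub, e.p.comm_d, hpk, hpk, sub_self]
  have key_smul : ∀ (i j : ℤ) (a : A.X i) (m : M.X j),
      h.f (i+j-1) (e.E.d (i+j) (k.f (i+j) (M.smul a m)) - k.f (i+j-1) (M.d (i+j) (M.smul a m))) =
      (i.negOnePow : ℤ) • N.cst (by omega)
        (N.smul a (h.f (j-1) (e.E.d j (k.f j m) - k.f (j-1) (M.d j m)))) := by
    intro i j a m
    have h1 : i - 1 + j = i + j - 1 := by omega
    have h2 : i + (j - 1) = i + j - 1 := by omega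
    apply e.inj (i + j - 1)
    have hL : e.ι.f (i+j-1) (h.f (i+j-1)
        (e.E.d (i+j) (k.f (i+j) (M.smul a m)) - k.f (i+j-1) (M.d (i+j) (M.smul a m)))) =
        e.E.d (i+j) (k.f (i+j) (M.smul a m)) - k.f (i+j-1) (M.d (i+j) (M.smul a m)) :=
      hιD (i+j) (M.smul a m)
    have hR : e.ι.f (j-1) (h.f (j-1) (e.E.d j (k.f j m) - k.f (j-1) (M.d j m))) =
        e.E.d j (k.f j m) - k.f (j-1) (M.d j m) := hιD j m
    have t1 : e.E.d (i+j) (e.E.smul a (k.f j m)) =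
        e.E.cst h1 (e.E.smul (A.d i a) (k.f j m)) +
          (i.negOnePow : ℤ) • e.E.cst h2 (e.E.smul a (e.E.d j (k.f j m))) :=
      e.E.leibniz a (k.f j m)
    have t2 : M.d (i+j) (M.smul a m) =
        M.cst h1 (M.smul (A.d i a) m) + (i.negOnePow : ℤ) • M.cst h2 (M.smul a (M.d j m)) :=
      M.leibniz a m
    have t3 : k.f (i+j-1) (M.d (i+j) (M.smul a m)) =
        e.E.cst h1 (e.E.smul (A.d i a) (k.f j m)) +
          (i.negOnePow : ℤ) • e.E.cst h2 (e.E.smul a (k.f (j-1) (M.d j m))) := by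
      rw [t2, map_add, map_zsmul, GH0.f_cst, GH0.f_cst, k.comm_smul, k.comm_smul]
    have hR2 : e.ι.f (i + j - 1) ((i.negOnePow : ℤ) • N.cst h2
          (N.smul a (h.f (j-1) (e.E.d j (k.f j m) - k.f (j-1) (M.d j m))))) =
        (i.negOnePow : ℤ) • e.E.cst h2 (e.E.smul a (e.E.d j (k.f j m))) -
          (i.negOnePow : ℤ) • e.E.cst h2 (e.E.smul a (k.f (j-1) (M.d j m))) := by
      rw [map_zsmul, DGHom.f_cst, e.ι.comm_smul, hR, e.E.smul_sub, map_sub, smul_sub]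
    calc e.ι.f (i+j-1) (h.f (i+j-1)
          (e.E.d (i+j) (k.f (i+j) (M.smul a m)) - k.f (i+j-1) (M.d (i+j) (M.smul a m))))
        = e.E.d (i+j) (k.f (i+j) (M.smul a m)) - k.f (i+j-1) (M.d (i+j) (M.smul a m)) := hL
      _ = (i.negOnePow : ℤ) • e.E.cst h2 (e.E.smul a (e.E.d j (k.f j m))) -
            (i.negOnePow : ℤ) • e.E.cst h2 (e.E.smul a (k.f (j-1) (M.d j m))) := by
          rw [k.comm_smul, t1, t3]
          abel
      _ = e.ι.f (i + j - 1) ((i.negOnePow : ℤ) • N.cst h2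
            (N.smul a (h.f (j-1) (e.E.d j (k.f j m) - k.f (j-1) (M.d j m))))) := hR2.symm
  have key_cycle : ∀ (i : ℤ) (m : M.X i),
      N.d (i-1) (h.f (i-1) (e.E.d i (k.f i m) - k.f (i-1) (M.d i m))) +
        h.f (i-1-1) (e.E.d (i-1) (k.f (i-1) (M.d i m)) - k.f (i-1-1) (M.d (i-1) (M.d i m))) = 0 := by
    intro i m
    apply e.inj (i-1-1)
    rw [map_add, map_zero]
    have c1 : e.ι.f (i-1-1) (N.d (i-1) (h.f (i-1) (e.E.d i (k.f i m) - k.f (i-1) (M.d i m)))) =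
        e.E.d (i-1) (e.E.d i (k.f i m) - k.f (i-1) (M.d i m)) := by
      conv_rhs => rw [← hιD i m]
      rw [e.ι.comm_d]
    have c2 : e.ι.f (i-1-1) (h.f (i-1-1)
          (e.E.d (i-1) (k.f (i-1) (M.d i m)) - k.f (i-1-1) (M.d (i-1) (M.d i m)))) =
        e.E.d (i-1) (k.f (i-1) (M.d i m)) - k.f (i-1-1) (M.d (i-1) (M.d i m)) := hιD (i-1) (M.d i m)
    rw [c1, c2, map_sub, e.E.d_sq, M.d_sq, map_zero]
    abel
  refine ⟨⟨fun u => (h.f (u-1)).comp ((e.E.d u).comp (k.f u) - (k.f (u-1)).comp (M.d u)),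
      fun {i j} a m => key_smul i j a m⟩, fun i m => key_cycle i m, ?_⟩
  -- the equivalence
  refine ⟨⟨fun i => (e.ι.f i).comp (LinearMap.fst _ _ _) + (k.f i).comp (LinearMap.snd _ _ _),
      ?_, ?_⟩, ?_, ?_, ?_⟩
  · -- comm_d
    intro i z
    show e.ι.f (i-1) (N.d i z.1 + h.f (i-1) (e.E.d i (k.f i z.2) - k.f (i-1) (M.d i z.2))) +
        k.f (i-1) (M.d i z.2) = e.E.d i (e.ι.f i z.1 + k.f i z.2)
    rw [map_add, map_add, hιD, e.ι.comm_d]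
    abel
  · -- comm_smul
    intro i j a z
    show e.ι.f (i+j) (N.smul a z.1) + k.f (i+j) (M.smul a z.2) =
      e.E.smul a (e.ι.f j z.1 + k.f j z.2)
    rw [e.ι.comm_smul, k.comm_smul, e.E.smul_add]
  · -- bijective, via the five lemma
    apply DGExt.bij_of_compat
    · intro i n
      show e.ι.f i n + k.f i 0 = e.ι.f i n
      rw [map_zero, add_zero]
    · intro i z
      show e.p.f i (e.ι.f i z.1 + k.f i z.2) = z.2
      rw [map_add, hpι, hpk, zero_add]
  · -- ι compat
    intro i n
    show e.ι.f i n + k.f i 0 = e.ι.f i n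
    rw [map_zero, add_zero]
  · -- p compat
    intro i z
    show e.p.f i (e.ι.f i z.1 + k.f i z.2) = z.2
    rw [map_add, hpι, hpk, zero_add]

end AuxSplit
section AuxProj

variable {R : Type} [CommRing R] {A : DGAlg R}

lemma gradedSplit_of_projective {N M : DGMod R A} (hM : GradedProjective M) (e : DGExt M N) :
    e.GradedSplit := by
  classical
  -- the identity as a degree 0 graded map
  have hid : ∃ g : GHn M M 0, ∀ i (m : M.X i), g.f i m = M.cst (by omega) m := by
    refine ⟨⟨fun i => M.cst (by omega), ?_⟩, fun i m => rfl⟩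
    intro i j a m
    rw [mul_zero]
    simp only [Int.negOnePow_zero, Units.val_one, one_smul]
    rw [M.smul_cst, M.toCx.cst_cst]
  obtain ⟨g, hg⟩ := hid
  obtain ⟨k0, hk0⟩ := hM e.E M e.p e.surj 0 g
  -- the graded section k
  have hk : ∃ k : GH0 M e.E, (∀ i (m : M.X i), k.f i m = e.E.cst (by omega) (k0.f i m)) := by
    refine ⟨⟨fun i => (e.E.cst (by omega : i + 0 = i)).comp (k0.f i), ?_⟩, fun i m => rfl⟩
    intro i j a m
    show e.E.cst (by omega : i + j + 0 = i + j) (k0.f (i + j) (M.smul a m)) = _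
    rw [k0.comm_smul, mul_zero]
    simp only [Int.negOnePow_zero, Units.val_one, one_smul]
    simp only [LinearMap.coe_comp, comp_apply]
    rw [e.E.smul_cst, e.E.toCx.cst_cst]
  obtain ⟨k, hk⟩ := hk
  have hpk : ∀ i (m : M.X i), e.p.f i (k.f i m) = m := by
    intro i m
    rw [hk, DGHom.f_cst, hk0, hg, M.toCx.cst_cst]
    rfl
  -- the graded retraction h
  have hker : ∀ i (z : e.E.X i), e.p.f i z = 0 → ∃ n, e.ι.f i n = z := by
    intro i z hz
    have : z ∈ LinearMap.ker (e.p.f i) := hz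
    rw [← e.exact i] at this
    exact this
  have hmem : ∀ i (z : e.E.X i), e.p.f i (z - k.f i (e.p.f i z)) = 0 := by
    intro i z; rw [map_sub, hpk, sub_self]
  choose h0 hh0 using fun i (z : e.E.X i) => hker i _ (hmem i z)
  have h0add : ∀ i (z z' : e.E.X i), h0 i (z + z') = h0 i z + h0 i z' := by
    intro i z z'
    apply e.inj i
    rw [map_add, hh0, hh0, hh0, map_add, map_add]
    abel
  have h0smul : ∀ i (r : R) (z : e.E.X i), h0 i (r • z) = r • h0 i z := by
    intro i r z
    apply e.inj i
    rw [hh0, map_smul (e.ι.f i), hh0, map_smul (e.p.f i), map_smul (k.f i), smul_sub]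
  have h0comm : ∀ (i j : ℤ) (a : A.X i) (z : e.E.X j),
      h0 (i + j) (e.E.smul a z) = N.smul a (h0 j z) := by
    intro i j a z
    apply e.inj (i + j)
    rw [hh0, e.ι.comm_smul, hh0, e.p.comm_smul, k.comm_smul, ← e.E.smul_sub]
  refine ⟨⟨fun i => ⟨⟨h0 i, h0add i⟩, h0smul i⟩, fun {i j} a z => h0comm i j a z⟩, k,
    ?_, hpk, ?_, ?_⟩
  · -- h ∘ ι = id
    intro i x
    apply e.inj i
    show e.ι.f i (h0 i (e.ι.f i x)) = e.ι.f i x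
    rw [hh0]
    have : e.p.f i (e.ι.f i x) = 0 := by
      have : e.ι.f i x ∈ LinearMap.ker (e.p.f i) := by
        rw [← e.exact i]; exact ⟨x, rfl⟩
      exact this
    rw [this, map_zero, sub_zero]
  · -- h ∘ k = 0
    intro i q
    apply e.inj i
    show e.ι.f i (h0 i (k.f i q)) = e.ι.f i 0
    rw [hh0, hpk, map_zero, sub_self]
  · -- ι h + k p = id
    intro i x
    show e.ι.f i (h0 i x) + k.f i (e.p.f i x) = x
    rw [hh0]
    abel

end AuxProj
section AuxBaer

variable {R : Type} [CommRing R] {A : DGAlg R}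

lemma baer_key {N M : DGMod R A} (l l' : GHneg M N) (hc : l.isCycle) (hc' : l'.isCycle)
    (t : DGExt M N) (hB : IsBaerSum (stdExt N M l hc) (stdExt N M l' hc') t) :
    (stdExt N M (l + l') (GHneg.isCycle_add hc hc')).Equiv' t := by
  classical
  obtain ⟨P, p1, p2, γ, τ, hpb, hinj, hex, hγ1, hγ2, hτs, hτk, hτι, hτp⟩ := hB
  have hinj' : ∀ (i : ℤ) (u v : P.X i), p1.f i u = p1.f i v → p2.f i u = p2.f i v → u = v := by
    intro i u v h1 h2
    apply hinj i
    show (p1.f i u, p2.f i u) = (p1.f i v, p2.f i v)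
    rw [h1, h2]
  have hsel : ∀ (i : ℤ) (z : N.X i × M.X i), ∃ w : P.X i,
      p1.f i w = z ∧ p2.f i w = ((0, z.2) : N.X i × M.X i) :=
    fun i z => hex i z (0, z.2) rfl
  choose s0 hs1 hs2 using hsel
  have hτγ : ∀ (i : ℤ) (n : N.X i), τ.f i (γ.f i n) = 0 := by
    intro i n
    have : γ.f i n ∈ LinearMap.ker (τ.f i) := by rw [← hτk i]; exact ⟨n, rfl⟩
    exact this
  have hs0add : ∀ (i : ℤ) (u v : N.X i × M.X i), s0 i (u + v) = s0 i u + s0 i v := by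
    intro i u v
    apply hinj' i
    · rw [map_add, hs1, hs1, hs1]; rfl
    · rw [map_add, hs2, hs2, hs2]
      refine Prod.ext ?_ rfl
      show (0 : N.X i) = 0 + 0
      rw [add_zero]
  have hs0smul : ∀ (i : ℤ) (r : R) (u : N.X i × M.X i), s0 i (r • u) = r • s0 i u := by
    intro i r u
    apply hinj' i
    · rw [map_smul, hs1, hs1]; rfl
    · rw [map_smul, hs2, hs2]
      refine Prod.ext ?_ rfl
      show (0 : N.X i) = r • 0
      rw [smul_zero]
  have key_d : ∀ (i : ℤ) (z : N.X i × M.X i),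
      s0 (i-1) ((N.d i z.1 + (l.f i z.2 + l'.f i z.2), M.d i z.2) : N.X (i-1) × M.X (i-1)) =
        P.d i (s0 i z) + γ.f (i-1) (-(l'.f i z.2)) := by
    intro i z
    apply hinj' (i-1)
    · rw [map_add, p1.comm_d, hs1, hs1, map_neg (γ.f (i-1)), map_neg (p1.f (i-1)), hγ1, neg_neg]
      refine Prod.ext ?_ ?_
      · show N.d i z.1 + (l.f i z.2 + l'.f i z.2) = (N.d i z.1 + l.f i z.2) + l'.f i z.2
        abel
      · show M.d i z.2 = M.d i z.2 + 0
        rw [add_zero]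
    · rw [map_add, p2.comm_d, hs2, hs2, map_neg (γ.f (i-1)), map_neg (p2.f (i-1)), hγ2]
      refine Prod.ext ?_ ?_
      · show (0 : N.X (i-1)) = (N.d i 0 + l'.f i z.2) + -(l'.f i z.2)
        rw [map_zero, zero_add, add_neg_cancel]
      · show M.d i z.2 = M.d i z.2 + -0
        rw [neg_zero, add_zero]
  have key_smul : ∀ (i j : ℤ) (a : A.X i) (z : N.X j × M.X j),
      s0 (i+j) ((N.smul a z.1, M.smul a z.2) : N.X (i+j) × M.X (i+j)) = P.smul a (s0 j z) := by
    intro i j a z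
    apply hinj' (i+j)
    · rw [hs1, p1.comm_smul, hs1]; rfl
    · rw [hs2, p2.comm_smul, hs2]
      refine Prod.ext ?_ rfl
      exact (N.smul_zero' a).symm
  let sL : ∀ i : ℤ, (N.X i × M.X i) →ₗ[R] P.X i := fun i => ⟨⟨s0 i, hs0add i⟩, hs0smul i⟩
  have φcd : ∀ (i : ℤ) (z : N.X i × M.X i),
      ((τ.f (i-1)).comp (sL (i-1)))
        ((stdExt N M (l + l') (GHneg.isCycle_add hc hc')).E.d i z) =
      t.E.d i (((τ.f i).comp (sL i)) z) := by
    intro i z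
    show τ.f (i-1) (s0 (i-1)
        ((N.d i z.1 + (l.f i z.2 + l'.f i z.2), M.d i z.2) : N.X (i-1) × M.X (i-1))) =
      t.E.d i (τ.f i (s0 i z))
    rw [key_d i z, map_add, hτγ, add_zero, τ.comm_d]
  have φcs : ∀ (i j : ℤ) (a : A.X i) (z : N.X j × M.X j),
      ((τ.f (i+j)).comp (sL (i+j)))
        ((stdExt N M (l + l') (GHneg.isCycle_add hc hc')).E.smul a z) =
      t.E.smul a (((τ.f j).comp (sL j)) z) := by
    intro i j a z
    show τ.f (i+j) (s0 (i+j) ((N.smul a z.1, M.smul a z.2) : N.X (i+j) × M.X (i+j))) =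
      t.E.smul a (τ.f j (s0 j z))
    rw [key_smul, τ.comm_smul]
  let φ : DGHom (stdExt N M (l + l') (GHneg.isCycle_add hc hc')).E t.E :=
    ⟨fun i => (τ.f i).comp (sL i), φcd, fun {i j} a m => φcs i j a m⟩
  have hφι : ∀ (i : ℤ) (n : N.X i),
      φ.f i ((stdExt N M (l + l') (GHneg.isCycle_add hc hc')).ι.f i n) = t.ι.f i n := by
    intro i n
    show τ.f i (s0 i ((n, 0) : N.X i × M.X i)) = t.ι.f i n
    refine hτι i n _ ?_ ?_
    · rw [hs1]; rfl
    · rw [hs2]; rfl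
  have hφp : ∀ (i : ℤ) (z : (stdExt N M (l + l') (GHneg.isCycle_add hc hc')).E.X i),
      t.p.f i (φ.f i z) = (stdExt N M (l + l') (GHneg.isCycle_add hc hc')).p.f i z := by
    intro i z
    show t.p.f i (τ.f i (s0 i z)) = z.2
    rw [hτp]; exact congrArg Prod.snd (hs1 i z)
  exact ⟨φ, DGExt.bij_of_compat _ t φ hφι hφp, hφι, hφp⟩

end AuxBaer
section Statement18

variable {R : Type} [CommRing R] {A : DGAlg R} (N M : DGMod R A)

/-- degree `-1` cycles in `Hom_A(M,N)` -/
def Cyc := {l : GHneg M N // l.isCycle}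

instance : Add (Cyc N M) :=
  ⟨fun x y => ⟨x.1 + y.1, GHneg.isCycle_add x.2 y.2⟩⟩

/-- `H_0(Hom_A(Σ⁻¹M,N)) ≅ H_{−1}(Hom_A(M,N))`: cycles modulo boundaries -/
def Hneg1 := Quot (fun x y : Cyc N M => (x.1 - y.1).isBdry)

/-- `YExt^1_A(M,N)`: extensions modulo Yoneda equivalence -/
def YExt1 := Quot (fun e e' : DGExt M N => e.Equiv' e')

/-!
STATEMENT 18. For DG `A`-modules `M`, `N` there is an injective homomorphism of abelian
groups `κ : H_0(Hom_A(Σ^{-1}M, N)) ≅ H_{−1}(Hom_A(M,N)) → YExt^1_A(M,N)` (sending the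
class of a cycle `λ` to the class of the extension `N ⊕_λ M`, and turning sums of cycles
into Baer sums) whose image is exactly the set of classes of graded-split short exact
sequences `0 → N → X → M → 0`.  If moreover `M` is graded-projective then `κ` is
bijective, so `H_{−1}(Hom_A(M,N)) ≅ YExt^1_A(M,N)`.
-/

theorem kappa_mono_image_graded_split :
    ∃ κ : Hneg1 N M → YExt1 N M,
      Injective κ ∧
      (∀ (l : GHneg M N) (hc : l.isCycle),
        κ (Quot.mk _ (⟨l, hc⟩ : Cyc N M)) = Quot.mk _ (stdExt N M l hc)) ∧
      -- `κ` is additive (sums of cycles go to Baer sums):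
      (∀ (x y : Cyc N M) (t : DGExt M N),
        IsBaerSum (stdExt N M x.1 x.2) (stdExt N M y.1 y.2) t →
          κ (Quot.mk _ (x + y)) = Quot.mk _ t) ∧
      -- the image of `κ` is the set of classes of graded-split extensions:
      (∀ z : YExt1 N M, (∃ x, κ x = z) ↔
        ∃ e : DGExt M N, e.GradedSplit ∧ z = Quot.mk _ e) ∧
      -- if `M` is graded-projective, `κ` is bijective:
      (GradedProjective M → Surjective κ) := by
  classical
  refine ⟨Quot.lift (fun x : Cyc N M => Quot.mk _ (stdExt N M x.1 x.2))
    (fun a b hab => Quot.sound (stdExt_equiv_of_bdry a.1 b.1 a.2 b.2 hab)),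
    ?_, fun l hc => rfl, fun x y t hB => Quot.sound (baer_key x.1 y.1 x.2 y.2 t hB), ?_, ?_⟩
  · -- injectivity
    intro a b hab
    obtain ⟨xa, rfl⟩ := Quot.exists_rep a
    obtain ⟨xb, rfl⟩ := Quot.exists_rep b
    have hab' : (Quot.mk _ (stdExt N M xa.1 xa.2) : YExt1 N M) =
        Quot.mk _ (stdExt N M xb.1 xb.2) := hab
    have heqv := Quot.eq.mp hab'
    have hE : (stdExt N M xa.1 xa.2).Equiv' (stdExt N M xb.1 xb.2) :=
      ((DGExt.equiv'_equivalence M N).eqvGen_iff).mp heqv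
    exact Quot.sound (stdExt_bdry_of_equiv xa.1 xb.1 xa.2 xb.2 hE)
  · -- image characterization
    intro z
    constructor
    · rintro ⟨w, rfl⟩
      obtain ⟨c, rfl⟩ := Quot.exists_rep w
      exact ⟨stdExt N M c.1 c.2, stdExt_gradedSplit N M c.1 c.2, rfl⟩
    · rintro ⟨e, hsp, rfl⟩
      obtain ⟨l, hc, heq⟩ := gradedSplit_equiv e hsp
      exact ⟨Quot.mk _ ⟨l, hc⟩, Quot.sound heq⟩
  · -- surjectivity when `M` is graded-projective
    intro hproj z
    obtain ⟨e, rfl⟩ := Quot.exists_rep z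
    obtain ⟨l, hc, heq⟩ := gradedSplit_equiv e (gradedSplit_of_projective hproj e)
    exact ⟨Quot.mk _ ⟨l, hc⟩, Quot.sound heq⟩

end Statement18
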